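/- Let Y₁, ..., Y_m be independent Bernoulli random variables with P(Y_s = 1) = p_s, and values v₁ ≥ v₂ ≥ ... ≥ v_m ≥ 0. Let b = min{a : Σ_{s=1}^a p_s ≥ 1} (assume Σ_s p_s ≥ 1). Then E[max_s Y_s · v_s] ≥ (1 - 1/e) · (v_b + Σ_{s=1}^m p_s · (v_s - v_b)⁺). -/
import Mathlib

open Finset

/-- Expected value of `max_{s ∈ A} v s` (with `max ∅ = 0`) where each index `s`
is included in `A` independently with probability `p s`. -/
noncomputable def expectedMax {m : ℕ} (p v : Fin m → ℝ) : ℝ :=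
  ∑ A : Finset (Fin m),
    (∏ s ∈ A, p s) * (∏ s ∈ Aᶜ, (1 - p s)) * (A.fold max 0 v)

namespace ExpMaxAux

variable {m : ℕ}

/-- extension of `v` to ℕ by zero -/
noncomputable def V (v : Fin m → ℝ) (j : ℕ) : ℝ := if h : j < m then v ⟨j, h⟩ else 0

/-- increments -/
noncomputable def c (v : Fin m → ℝ) (s : Fin m) : ℝ := V v s.val - V v (s.val + 1)

lemma c_nonneg (v : Fin m → ℝ) (hv : ∀ s t : Fin m, s ≤ t → v t ≤ v s)
    (hv0 : ∀ s, 0 ≤ v s) (s : Fin m) : 0 ≤ c v s := by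
  unfold c V
  rcases lt_or_ge (s.val + 1) m with h | h
  · simp only [dif_pos s.isLt, dif_pos h]
    have : s ≤ (⟨s.val + 1, h⟩ : Fin m) := by simp [Fin.le_def]
    linarith [hv s ⟨s.val + 1, h⟩ this]
  · simp only [dif_pos s.isLt, dif_neg (not_lt.mpr h)]
    linarith [hv0 s]

lemma telescope (v : Fin m → ℝ) (a : Fin m) :
    ∑ s ∈ Finset.univ.filter (fun s => a ≤ s), c v s = v a := by
  have key : ∑ i ∈ Finset.range (m - a.val), (V v (a.val + i) - V v (a.val + i + 1)) = v a := by
    have h := Finset.sum_range_sub' (fun i => V v (a.val + i)) (m - a.val)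
    simp only [add_zero, ← add_assoc] at h
    have hma : a.val + (m - a.val) = m := by omega
    rw [h, hma]
    unfold V
    simp [a.isLt]
  rw [← key]
  refine Finset.sum_nbij' (i := fun s => s.val - a.val)
    (j := fun j => if h : a.val + j < m then (⟨a.val + j, h⟩ : Fin m) else a) ?_ ?_ ?_ ?_ ?_
  · intro s hs
    simp only [Finset.mem_filter, Finset.mem_univ, true_and, Fin.le_def] at hs
    simp only [Finset.mem_range]
    omega
  · intro j hj
    simp only [Finset.mem_range] at hj
    have h : a.val + j < m := by omega
    simp only [dif_pos h, Finset.mem_filter, Finset.mem_univ, true_and, Fin.le_def]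
    omega
  · intro s hs
    simp only [Finset.mem_filter, Finset.mem_univ, true_and, Fin.le_def] at hs
    have h : a.val + (s.val - a.val) < m := by omega
    simp only [dif_pos h]
    apply Fin.ext
    simp
    omega
  · intro j hj
    simp only [Finset.mem_range] at hj
    have h : a.val + j < m := by omega
    simp only [dif_pos h]
    omega
  · intro s hs
    simp only [Finset.mem_filter, Finset.mem_univ, true_and, Fin.le_def] at hs
    unfold c
    have : a.val + (s.val - a.val) = s.val := by omega
    rw [this]

lemma weight_disjoint_sum (p : Fin m → ℝ) (S : Finset (Fin m)) :
    ∑ A : Finset (Fin m),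
      (if Disjoint A S then (∏ s ∈ A, p s) * ∏ s ∈ Aᶜ, (1 - p s) else 0)
      = ∏ t ∈ S, (1 - p t) := by
  classical
  rw [← Finset.sum_filter]
  have h1 : (Finset.univ.filter (fun A : Finset (Fin m) => Disjoint A S)) = Sᶜ.powerset := by
    ext A
    simp only [Finset.mem_filter, Finset.mem_univ, true_and, Finset.mem_powerset,
      ← Finset.le_iff_subset, le_compl_iff_disjoint_right]
  rw [h1]
  have key : ∀ A ∈ Sᶜ.powerset, (∏ s ∈ A, p s) * ∏ s ∈ Aᶜ, (1 - p s)
      = ((∏ s ∈ A, p s) * ∏ s ∈ Sᶜ \ A, (1 - p s)) * ∏ t ∈ S, (1 - p t) := by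
    intro A hA
    rw [Finset.mem_powerset] at hA
    have hAS : ∀ x, x ∈ A → x ∉ S := fun x hx => Finset.mem_compl.mp (hA hx)
    have hAc : Aᶜ = (Sᶜ \ A) ∪ S := by
      ext x
      simp only [Finset.mem_compl, Finset.mem_union, Finset.mem_sdiff]
      by_cases h : x ∈ S <;> by_cases h2 : x ∈ A <;> simp_all [hAS x]
    have hdisj : Disjoint (Sᶜ \ A) S :=
      Disjoint.mono_left (Finset.sdiff_subset) (disjoint_compl_left)
    rw [hAc, Finset.prod_union hdisj, mul_assoc]
  rw [Finset.sum_congr rfl key, ← Finset.sum_mul]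
  have := (Finset.prod_add p (fun i => 1 - p i) Sᶜ).symm
  rw [this]
  simp

lemma weight_total (p : Fin m → ℝ) :
    ∑ A : Finset (Fin m), (∏ s ∈ A, p s) * ∏ s ∈ Aᶜ, (1 - p s) = 1 := by
  have h := weight_disjoint_sum p (∅ : Finset (Fin m))
  simpa using h

lemma exp_neg_le_lin {x : ℝ} (h0 : 0 ≤ x) (h1 : x ≤ 1) :
    Real.exp (-x) ≤ 1 - (1 - 1 / Real.exp 1) * x := by
  have hc := convexOn_exp.2 (Set.mem_univ (0 : ℝ)) (Set.mem_univ (-1 : ℝ))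
    (show (0:ℝ) ≤ 1 - x by linarith) h0 (by ring)
  simp only [smul_eq_mul, mul_zero, zero_add, mul_neg, mul_one, Real.exp_zero] at hc
  simp only [Real.exp_neg, one_div] at hc ⊢
  linarith

end ExpMaxAux
open ExpMaxAux

theorem expectedMax_ge_truncated_sum {m : ℕ} (p v : Fin m → ℝ) (b : Fin m)
    (hp0 : ∀ s, 0 ≤ p s) (hp1 : ∀ s, p s ≤ 1)
    (hv : ∀ s t : Fin m, s ≤ t → v t ≤ v s) (hv0 : ∀ s, 0 ≤ v s)
    (hb : 1 ≤ ∑ s ∈ Finset.univ.filter (fun s => s ≤ b), p s)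
    (hbmin : ∀ a : Fin m, a < b →
      ∑ s ∈ Finset.univ.filter (fun s => s ≤ a), p s < 1) :
    (1 - 1 / Real.exp 1) * (v b + ∑ s, p s * max (v s - v b) 0) ≤
      expectedMax p v := by
  classical
  set w : Finset (Fin m) → ℝ := fun A => (∏ s ∈ A, p s) * ∏ s ∈ Aᶜ, (1 - p s) with hw
  have hwnn : ∀ A, 0 ≤ w A := fun A =>
    mul_nonneg (Finset.prod_nonneg fun s _ => hp0 s)
      (Finset.prod_nonneg fun s _ => by linarith [hp1 s])
  have hEM : expectedMax p v = ∑ A : Finset (Fin m), w A * A.fold max 0 v := by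
    simp only [expectedMax, hw]
  -- sum of p over s < b is < 1
  have hltb : ∑ s ∈ Finset.univ.filter (fun s => s < b), p s < 1 := by
    rcases Nat.eq_zero_or_pos b.val with h0 | h0
    · have he : Finset.univ.filter (fun s : Fin m => s < b) = ∅ := by
        ext s
        simp only [Finset.mem_filter, Finset.mem_univ, true_and, Finset.notMem_empty,
          iff_false, Fin.lt_def]
        omega
      simp [he]
    · have hab : (⟨b.val - 1, by omega⟩ : Fin m) < b := by
        rw [Fin.lt_def]
        show b.val - 1 < b.val
        omega
      have h := hbmin ⟨b.val - 1, by omega⟩ hab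
      have hfe : Finset.univ.filter (fun s : Fin m => s ≤ (⟨b.val - 1, by omega⟩ : Fin m))
          = Finset.univ.filter (fun s => s < b) := by
        ext s
        simp only [Finset.mem_filter, Finset.mem_univ, true_and, Fin.le_def, Fin.lt_def]
        show s.val ≤ b.val - 1 ↔ s.val < b.val
        omega
      rwa [hfe] at h
  have hsplit : Finset.univ.filter (fun s : Fin m => s ≤ b)
      = insert b (Finset.univ.filter (fun s => s < b)) := by
    ext s
    simp only [Finset.mem_filter, Finset.mem_univ, true_and, Finset.mem_insert]
    constructor
    · intro h
      rcases eq_or_lt_of_le h with h | h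
      · exact Or.inl h
      · exact Or.inr h
    · rintro (rfl | h)
      · exact le_rfl
      · exact le_of_lt h
  have hbnotmem : b ∉ Finset.univ.filter (fun s : Fin m => s < b) := by simp
  -- modified probabilities
  set q : Fin m → ℝ := fun s =>
    if s < b then p s
    else if s = b then 1 - ∑ t ∈ Finset.univ.filter (fun t => t < b), p t
    else 0 with hq
  have hqlt : ∀ s, s < b → q s = p s := by
    intro s h
    rw [hq]
    simp only [if_pos h]
  have hqb : q b = 1 - ∑ t ∈ Finset.univ.filter (fun t => t < b), p t := by
    rw [hq]
    simp
  have hq0 : ∀ s, 0 ≤ q s := by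
    intro s
    rw [hq]
    dsimp only
    split_ifs with h1 h2
    · exact hp0 s
    · linarith
    · exact le_rfl
  have hqp : ∀ s, q s ≤ p s := by
    intro s
    rw [hq]
    dsimp only
    split_ifs with h1 h2
    · exact le_rfl
    · subst h2
      rw [hsplit, Finset.sum_insert hbnotmem] at hb
      linarith
    · exact hp0 s
  have hq1 : ∀ s, q s ≤ 1 := fun s => le_trans (hqp s) (hp1 s)
  have hqsum : ∑ s ∈ Finset.univ.filter (fun s => s ≤ b), q s = 1 := by
    rw [hsplit, Finset.sum_insert hbnotmem, hqb]
    have h : ∑ s ∈ Finset.univ.filter (fun s : Fin m => s < b), q s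
        = ∑ s ∈ Finset.univ.filter (fun s : Fin m => s < b), p s := by
      refine Finset.sum_congr rfl fun s hs => ?_
      exact hqlt s (Finset.mem_filter.mp hs).2
    rw [h]
    ring
  -- rewrite the RHS inner term
  have hrhs : v b + ∑ s, p s * max (v s - v b) 0
      = ∑ s ∈ Finset.univ.filter (fun s => s ≤ b), q s * v s := by
    have h1 : ∑ s, p s * max (v s - v b) 0
        = ∑ s ∈ Finset.univ.filter (fun s : Fin m => s < b), p s * (v s - v b) := by
      rw [← Finset.sum_filter_add_sum_filter_not Finset.univ (fun s : Fin m => s < b)]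
      have h2 : ∑ s ∈ Finset.univ.filter (fun s : Fin m => ¬ s < b), p s * max (v s - v b) 0
          = 0 := by
        apply Finset.sum_eq_zero
        intro s hs
        simp only [Finset.mem_filter, Finset.mem_univ, true_and, not_lt] at hs
        have hvs : v s ≤ v b := hv b s hs
        rw [max_eq_right (by linarith), mul_zero]
      rw [h2, add_zero]
      refine Finset.sum_congr rfl fun s hs => ?_
      simp only [Finset.mem_filter, Finset.mem_univ, true_and] at hs
      have : v b ≤ v s := hv s b (le_of_lt hs)
      rw [max_eq_left (by linarith)]
    have hqv : ∑ s ∈ Finset.univ.filter (fun s : Fin m => s < b), q s * v s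
        = ∑ s ∈ Finset.univ.filter (fun s : Fin m => s < b), p s * v s := by
      refine Finset.sum_congr rfl fun s hs => ?_
      rw [hqlt s (Finset.mem_filter.mp hs).2]
    have expand : ∑ s ∈ Finset.univ.filter (fun s : Fin m => s < b), p s * (v s - v b)
        = (∑ s ∈ Finset.univ.filter (fun s : Fin m => s < b), p s * v s)
          - (∑ s ∈ Finset.univ.filter (fun s : Fin m => s < b), p s) * v b := by
      rw [Finset.sum_mul, ← Finset.sum_sub_distrib]
      exact Finset.sum_congr rfl fun s _ => by ring
    rw [h1, hsplit, Finset.sum_insert hbnotmem, hqb, hqv, expand]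
    ring
  -- the lower-bound function g
  set g : Finset (Fin m) → ℝ := fun A => ∑ s, (if ∃ t ∈ A, t ≤ s then c v s else 0) with hg
  set Q : Fin m → ℝ := fun s => ∑ t ∈ Finset.univ.filter (fun t => t ≤ s ∧ t ≤ b), q t with hQ
  have step1 : ∑ A : Finset (Fin m), w A * g A ≤ expectedMax p v := by
    rw [hEM]
    refine Finset.sum_le_sum fun A _ => ?_
    refine mul_le_mul_of_nonneg_left ?_ (hwnn A)
    rw [hg]
    dsimp only
    by_cases hA : A.Nonempty
    · have ha := A.min'_mem hA
      have hcond : ∀ s : Fin m, (∃ t ∈ A, t ≤ s) ↔ A.min' hA ≤ s := fun s =>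
        ⟨fun ⟨t, ht, hts⟩ => le_trans (A.min'_le t ht) hts, fun h => ⟨_, ha, h⟩⟩
      calc ∑ s, (if ∃ t ∈ A, t ≤ s then c v s else 0)
          = ∑ s ∈ Finset.univ.filter (fun s => A.min' hA ≤ s), c v s := by
            rw [Finset.sum_filter]
            exact Finset.sum_congr rfl fun s _ => by simp only [hcond s]
        _ = v (A.min' hA) := telescope v _
        _ ≤ A.fold max 0 v := (Finset.le_fold_max _).mpr (Or.inr ⟨_, ha, le_rfl⟩)
    · rw [Finset.not_nonempty_iff_eq_empty] at hA
      subst hA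
      simp
  have step2 : ∑ A : Finset (Fin m), w A * g A
      = ∑ s, c v s * (1 - ∏ t ∈ Finset.univ.filter (fun t => t ≤ s), (1 - p t)) := by
    rw [hg]
    dsimp only
    simp_rw [Finset.mul_sum]
    rw [Finset.sum_comm]
    refine Finset.sum_congr rfl fun s _ => ?_
    have key : ∀ A : Finset (Fin m), w A * (if ∃ t ∈ A, t ≤ s then c v s else 0)
        = c v s * w A
          - c v s * (if Disjoint A (Finset.univ.filter (fun t => t ≤ s)) then w A else 0) := by
      intro A
      by_cases h : ∃ t ∈ A, t ≤ s
      · have hnd : ¬ Disjoint A (Finset.univ.filter (fun t => t ≤ s)) := by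
          obtain ⟨t, ht, hts⟩ := h
          rw [Finset.not_disjoint_iff]
          exact ⟨t, ht, by simp [hts]⟩
        rw [if_pos h, if_neg hnd, mul_zero, sub_zero, mul_comm]
      · have hd : Disjoint A (Finset.univ.filter (fun t => t ≤ s)) := by
          rw [Finset.disjoint_left]
          intro t ht htm
          simp only [Finset.mem_filter, Finset.mem_univ, true_and] at htm
          exact h ⟨t, ht, htm⟩
        rw [if_neg h, if_pos hd, mul_zero, sub_self]
    rw [Finset.sum_congr rfl fun A _ => key A, Finset.sum_sub_distrib,
      ← Finset.mul_sum, ← Finset.mul_sum]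
    simp only [hw]
    rw [weight_total p, weight_disjoint_sum p]
    ring
  have step3 : ∀ s : Fin m, (1 - 1 / Real.exp 1) * Q s
      ≤ 1 - ∏ t ∈ Finset.univ.filter (fun t => t ≤ s), (1 - p t) := by
    intro s
    have hKsub : Finset.univ.filter (fun t : Fin m => t ≤ s ∧ t ≤ b)
        ⊆ Finset.univ.filter (fun t => t ≤ s) := fun t ht => by
      simp only [Finset.mem_filter, Finset.mem_univ, true_and] at *
      exact ht.1
    have hKsubb : Finset.univ.filter (fun t : Fin m => t ≤ s ∧ t ≤ b)
        ⊆ Finset.univ.filter (fun t => t ≤ b) := fun t ht => by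
      simp only [Finset.mem_filter, Finset.mem_univ, true_and] at *
      exact ht.2
    have hQ0 : 0 ≤ Q s := Finset.sum_nonneg fun t _ => hq0 t
    have hQ1 : Q s ≤ 1 := by
      rw [← hqsum, hQ]
      exact Finset.sum_le_sum_of_subset_of_nonneg hKsubb fun t _ _ => hq0 t
    have hP1 : ∏ t ∈ Finset.univ.filter (fun t => t ≤ s), (1 - p t)
        ≤ ∏ t ∈ Finset.univ.filter (fun t : Fin m => t ≤ s ∧ t ≤ b), (1 - p t) := by
      rw [← Finset.prod_sdiff hKsub]
      have h1 : ∏ t ∈ (Finset.univ.filter (fun t : Fin m => t ≤ s))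
            \ (Finset.univ.filter (fun t : Fin m => t ≤ s ∧ t ≤ b)), (1 - p t) ≤ 1 :=
        Finset.prod_le_one (fun t _ => by linarith [hp1 t]) (fun t _ => by linarith [hp0 t])
      have h2 : (0:ℝ) ≤ ∏ t ∈ Finset.univ.filter (fun t : Fin m => t ≤ s ∧ t ≤ b), (1 - p t) :=
        Finset.prod_nonneg fun t _ => by linarith [hp1 t]
      nlinarith
    have hP2 : ∏ t ∈ Finset.univ.filter (fun t : Fin m => t ≤ s ∧ t ≤ b), (1 - p t)
        ≤ ∏ t ∈ Finset.univ.filter (fun t : Fin m => t ≤ s ∧ t ≤ b), (1 - q t) :=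
      Finset.prod_le_prod (fun t _ => by linarith [hp1 t]) (fun t _ => by linarith [hqp t])
    have hP3 : ∏ t ∈ Finset.univ.filter (fun t : Fin m => t ≤ s ∧ t ≤ b), (1 - q t)
        ≤ Real.exp (-(Q s)) := by
      have h3 : ∏ t ∈ Finset.univ.filter (fun t : Fin m => t ≤ s ∧ t ≤ b), (1 - q t)
          ≤ ∏ t ∈ Finset.univ.filter (fun t : Fin m => t ≤ s ∧ t ≤ b), Real.exp (-(q t)) :=
        Finset.prod_le_prod (fun t _ => by linarith [hq1 t])
          (fun t _ => by linarith [Real.add_one_le_exp (-(q t))])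
      rw [← Real.exp_sum] at h3
      have h4 : ∑ t ∈ Finset.univ.filter (fun t : Fin m => t ≤ s ∧ t ≤ b), -(q t)
          = -(Q s) := by
        rw [hQ, ← Finset.sum_neg_distrib]
      rwa [h4] at h3
    have hexp : Real.exp (-(Q s)) ≤ 1 - (1 - 1 / Real.exp 1) * Q s :=
      exp_neg_le_lin hQ0 hQ1
    linarith
  have step4 : ∑ s, c v s * ((1 - 1 / Real.exp 1) * Q s)
      = (1 - 1 / Real.exp 1) * ∑ t ∈ Finset.univ.filter (fun t => t ≤ b), q t * v t := by
    have h1 : ∀ s : Fin m, c v s * ((1 - 1 / Real.exp 1) * Q s)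
        = (1 - 1 / Real.exp 1) * (c v s * Q s) := fun s => by ring
    rw [Finset.sum_congr rfl fun s _ => h1 s, ← Finset.mul_sum]
    congr 1
    have h2 : ∀ s : Fin m, c v s * Q s
        = ∑ t, (if t ≤ s ∧ t ≤ b then c v s * q t else 0) := by
      intro s
      rw [hQ]
      dsimp only
      rw [Finset.mul_sum, ← Finset.sum_filter]
    rw [Finset.sum_congr rfl fun s _ => h2 s, Finset.sum_comm, Finset.sum_filter]
    refine Finset.sum_congr rfl fun t _ => ?_
    by_cases htb : t ≤ b
    · simp only [htb, and_true, if_true]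
      rw [← Finset.sum_filter, ← Finset.sum_mul, telescope]
      ring
    · simp [htb]
  calc (1 - 1 / Real.exp 1) * (v b + ∑ s, p s * max (v s - v b) 0)
      = (1 - 1 / Real.exp 1) * ∑ t ∈ Finset.univ.filter (fun t => t ≤ b), q t * v t := by
        rw [hrhs]
    _ = ∑ s, c v s * ((1 - 1 / Real.exp 1) * Q s) := step4.symm
    _ ≤ ∑ s, c v s * (1 - ∏ t ∈ Finset.univ.filter (fun t => t ≤ s), (1 - p t)) :=
        Finset.sum_le_sum fun s _ =>
          mul_le_mul_of_nonneg_left (step3 s) (c_nonneg v hv hv0 s)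
    _ = ∑ A : Finset (Fin m), w A * g A := step2.symm
    _ ≤ expectedMax p v := step1
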